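/- arXiv:1608.02695 — 2 statements merged into one kernel-verified Lean document; each statement's English description precedes it below -/
import Mathlib

section
/- Suppose ρ_{12} ≠ 0. If either (C_1 ≤ 1/2 < C_2 and q_0^{(0)} < q < q_0^{(1)}) or (1/2 < C_1 ≤ C_2 and C_1 < q < q_0^{(1)}), then every POVM attaining P̄_cor^opt(q) has M_1 = 0. -/
open Matrix ComplexOrder

noncomputable section

namespace FRIR

/-- A three-outcome POVM on a qubit: `M₀` is the inconclusive outcome. -/
def IsPOVM (M₀ M₁ M₂ : Matrix (Fin 2) (Fin 2) ℂ) : Prop :=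
  M₀.PosSemidef ∧ M₁.PosSemidef ∧ M₂.PosSemidef ∧ M₀ + M₁ + M₂ = 1

/-- `ρ₀ = q₁ρ₁ + q₂ρ₂`. -/
def rho0 (q₁ q₂ : ℝ) (ρ₁ ρ₂ : Matrix (Fin 2) (Fin 2) ℂ) : Matrix (Fin 2) (Fin 2) ℂ :=
  (q₁ : ℂ) • ρ₁ + (q₂ : ℂ) • ρ₂

/-- The probability of the inconclusive result, `P_I = tr(ρ₀M₀)`. -/
def PIof (q₁ q₂ : ℝ) (ρ₁ ρ₂ M₀ : Matrix (Fin 2) (Fin 2) ℂ) : ℝ :=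
  (Matrix.trace (rho0 q₁ q₂ ρ₁ ρ₂ * M₀)).re

/-- `P_cor = q₁tr(ρ₁M₁) + q₂tr(ρ₂M₂)`. -/
def Pcor (q₁ q₂ : ℝ) (ρ₁ ρ₂ M₁ M₂ : Matrix (Fin 2) (Fin 2) ℂ) : ℝ :=
  q₁ * (Matrix.trace (ρ₁ * M₁)).re + q₂ * (Matrix.trace (ρ₂ * M₂)).re

/-- `P̄_cor = q·tr(ρ₀M₀) + q₁tr(ρ₁M₁) + q₂tr(ρ₂M₂)`. -/
def PbarCor (q q₁ q₂ : ℝ) (ρ₁ ρ₂ M₀ M₁ M₂ : Matrix (Fin 2) (Fin 2) ℂ) : ℝ :=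
  q * PIof q₁ q₂ ρ₁ ρ₂ M₀ + Pcor q₁ q₂ ρ₁ ρ₂ M₁ M₂

/-- `P̄_cor^opt(q)`: the maximal value of `P̄_cor` over all POVMs. -/
def PbarOpt (q q₁ q₂ : ℝ) (ρ₁ ρ₂ : Matrix (Fin 2) (Fin 2) ℂ) : ℝ :=
  sSup {x : ℝ | ∃ M₀ M₁ M₂, IsPOVM M₀ M₁ M₂ ∧ PbarCor q q₁ q₂ ρ₁ ρ₂ M₀ M₁ M₂ = x}

/-- `P_cor^opt(Q)`: the maximal value of `P_cor` over POVMs with `P_I = Q`. -/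
def PcorOpt (Q q₁ q₂ : ℝ) (ρ₁ ρ₂ : Matrix (Fin 2) (Fin 2) ℂ) : ℝ :=
  sSup {x : ℝ | ∃ M₀ M₁ M₂, IsPOVM M₀ M₁ M₂ ∧
    PIof q₁ q₂ ρ₁ ρ₂ M₀ = Q ∧ Pcor q₁ q₂ ρ₁ ρ₂ M₁ M₂ = x}

/-- `P_I(q) = { tr(ρ₀M₀) : POVMs attaining P̄_cor^opt(q) }`. -/
def PIset (q q₁ q₂ : ℝ) (ρ₁ ρ₂ : Matrix (Fin 2) (Fin 2) ℂ) : Set ℝ :=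
  {Q : ℝ | ∃ M₀ M₁ M₂, IsPOVM M₀ M₁ M₂ ∧
    PbarCor q q₁ q₂ ρ₁ ρ₂ M₀ M₁ M₂ = PbarOpt q q₁ q₂ ρ₁ ρ₂ ∧ PIof q₁ q₂ ρ₁ ρ₂ M₀ = Q}

/-- `q₀⁽⁰⁾ = sup{q > 0 : 0 ∈ P_I(q)}`. -/
def q0low (q₁ q₂ : ℝ) (ρ₁ ρ₂ : Matrix (Fin 2) (Fin 2) ℂ) : ℝ :=
  sSup {q : ℝ | 0 < q ∧ (0 : ℝ) ∈ PIset q q₁ q₂ ρ₁ ρ₂}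

/-- `q₀⁽¹⁾ = inf{q > 0 : 1 ∈ P_I(q)}`. -/
def q0high (q₁ q₂ : ℝ) (ρ₁ ρ₂ : Matrix (Fin 2) (Fin 2) ℂ) : ℝ :=
  sInf {q : ℝ | 0 < q ∧ (1 : ℝ) ∈ PIset q q₁ q₂ ρ₁ ρ₂}

abbrev Mat := Matrix (Fin 2) (Fin 2) ℂ

lemma trace_psd_nonneg {A : Mat} (hA : A.PosSemidef) : 0 ≤ A.trace := by
  have h0 := hA.dotProduct_mulVec_nonneg (Pi.single 0 1)
  have h1 := hA.dotProduct_mulVec_nonneg (Pi.single 1 1)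
  simp [dotProduct, Matrix.mulVec, Fin.sum_univ_two, Pi.single_apply] at h0 h1
  rw [Matrix.trace_fin_two]
  exact add_nonneg h0 h1

lemma trace_mul_psd_nonneg {A B : Mat} (hA : A.PosSemidef) (hB : B.PosSemidef) :
    0 ≤ (A * B).trace := by
  classical
  obtain ⟨X, hX, -, rfl⟩ := open scoped MatrixOrder in
    CFC.exists_sqrt_of_isSelfAdjoint_of_quasispectrumRestricts hA.isHermitian
      (QuasispectrumRestricts.nnreal_of_nonneg hA.nonneg)
  rw [Matrix.mul_assoc, Matrix.trace_mul_comm]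
  have := hB.mul_mul_conjTranspose_same X
  rw [show Xᴴ = X from hX.star_eq] at this
  exact trace_psd_nonneg this

lemma re_nonneg_of_nonneg {z : ℂ} (h : 0 ≤ z) : 0 ≤ z.re := by
  rw [Complex.le_def] at h; exact h.1

lemma trace_mono {A B M : Mat} (h : (B - A).PosSemidef) (hM : M.PosSemidef) :
    ((A * M).trace).re ≤ ((B * M).trace).re := by
  have h1 := trace_mul_psd_nonneg h hM
  rw [Matrix.sub_mul, Matrix.trace_sub] at h1
  have := re_nonneg_of_nonneg h1
  simp only [Complex.sub_re] at this
  linarith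

lemma psd_eq_zero_of_trace {A : Mat} (hA : A.PosSemidef) (h : (A.trace).re = 0) : A = 0 := by
  have htr : A.trace = 0 := by
    have h1 := trace_psd_nonneg hA
    rw [Complex.le_def] at h1
    exact Complex.ext h (h1.2.symm)
  have hcol : ∀ j, A *ᵥ Pi.single j 1 = 0 := by
    intro j
    apply (hA.dotProduct_mulVec_zero_iff _).mp
    have hd : ∀ j : Fin 2, star (Pi.single j (1:ℂ)) ⬝ᵥ A *ᵥ Pi.single j 1 = A j j := by
      intro j
      fin_cases j <;>
        simp [dotProduct, Matrix.mulVec, Fin.sum_univ_two, Pi.single_apply]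
    rw [hd]
    have h00 := hA.dotProduct_mulVec_nonneg (Pi.single 0 1)
    have h11 := hA.dotProduct_mulVec_nonneg (Pi.single 1 1)
    rw [hd 0] at h00
    rw [hd 1] at h11
    rw [Matrix.trace_fin_two] at htr
    have h2 := (add_eq_zero_iff_of_nonneg h00 h11).mp htr
    fin_cases j
    · exact h2.1
    · exact h2.2
  ext i j
  have := congr_fun (hcol j) i
  simpa [Matrix.mulVec, dotProduct, Fin.sum_univ_two, Pi.single_apply] using this

lemma conj_psd {S X : Mat} (hS : S.IsHermitian) (hX : X.PosSemidef) :
    (S * X * S).PosSemidef := by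
  have := hX.mul_mul_conjTranspose_same S
  rwa [hS.eq] at this

lemma conj_cancel {S M : Mat} (hSS : (S * S).PosDef) (h : S * M * S = 0) : M = 0 := by
  have hdet : IsUnit S.det := by
    rw [isUnit_iff_ne_zero]
    intro hd
    obtain ⟨v, hv, hSv⟩ := (Matrix.exists_mulVec_eq_zero_iff).mpr hd
    have := hSS.dotProduct_mulVec_pos hv
    rw [← Matrix.mulVec_mulVec, hSv, Matrix.mulVec_zero, dotProduct_zero] at this
    exact lt_irrefl _ this
  have h1 : S⁻¹ * (S * M * S) * S⁻¹ = M := by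
    simp only [Matrix.mul_assoc]
    rw [Matrix.mul_nonsing_inv _ hdet, Matrix.mul_one, ← Matrix.mul_assoc,
      Matrix.nonsing_inv_mul _ hdet, Matrix.one_mul]
  rw [← h1, h, Matrix.mul_zero, Matrix.zero_mul]

lemma vecMulVec_psd (v : Fin 2 → ℂ) : (vecMulVec v (star v)).PosSemidef := by
  rw [Matrix.vecMulVec_eq (Fin 1), ← Matrix.conjTranspose_replicateCol]
  exact Matrix.posSemidef_self_mul_conjTranspose _

lemma psd_smul {X : Mat} (hX : X.PosSemidef) {a : ℝ} (ha : 0 ≤ a) :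
    ((a : ℂ) • X).PosSemidef := by
  refine Matrix.PosSemidef.of_dotProduct_mulVec_nonneg ?_ ?_
  · unfold Matrix.IsHermitian
    rw [Matrix.conjTranspose_smul, hX.1.eq]
    congr 1
    simp
  · intro x
    rw [Matrix.smul_mulVec, dotProduct_smul]
    have h1 : (0:ℂ) ≤ (a : ℂ) := by
      rw [Complex.le_def]; simp [ha]
    exact mul_nonneg h1 (hX.dotProduct_mulVec_nonneg x)

lemma resolution {ν₁ ν₂ : Fin 2 → ℂ}
    (h1 : star ν₁ ⬝ᵥ ν₁ = 1) (h2 : star ν₂ ⬝ᵥ ν₂ = 1) (h12 : star ν₁ ⬝ᵥ ν₂ = 0) :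
    vecMulVec ν₁ (star ν₁) + vecMulVec ν₂ (star ν₂) = 1 := by
  have h21 : star ν₂ ⬝ᵥ ν₁ = 0 := by
    rw [Matrix.star_dotProduct, h12, star_zero]
  set U : Mat := Matrix.of fun i j => ![ν₁, ν₂] j i with hU
  have hUU : Uᴴ * U = 1 := by
    simp only [dotProduct, Fin.sum_univ_two, Pi.star_apply] at h1 h2 h12 h21
    ext i j
    fin_cases i <;> fin_cases j <;>
      simpa [hU, Matrix.mul_apply, Fin.sum_univ_two, Matrix.conjTranspose_apply]
        using by assumption
  have hU1 : U * Uᴴ = 1 := mul_eq_one_comm.mp hUU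
  rw [← hU1]
  ext i j
  simp [hU, Matrix.mul_apply, Fin.sum_univ_two, Matrix.vecMulVec_apply,
    Matrix.conjTranspose_apply, mul_comm]

lemma smul_trace_re (c : ℝ) (X M : Mat) :
    (((c:ℂ) • X * M).trace).re = c * ((X * M).trace).re := by
  rw [Matrix.smul_mul, Matrix.trace_smul, smul_eq_mul, Complex.re_ofReal_mul]

lemma rep_trace_mono {S P₁ P₂ A B : Mat} (hS : S.IsHermitian)
    (hP₁ : P₁.PosSemidef) (hP₂ : P₂.PosSemidef)
    {x y u v : ℝ} (hA : S * ((x:ℂ) • P₁ + (y:ℂ) • P₂) * S = A)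
    (hB : S * ((u:ℂ) • P₁ + (v:ℂ) • P₂) * S = B)
    (hx : x ≤ u) (hy : y ≤ v) {M : Mat} (hM : M.PosSemidef) :
    ((A * M).trace).re ≤ ((B * M).trace).re := by
  apply trace_mono _ hM
  have hrep : B - A = S * (((u-x : ℝ):ℂ) • P₁ + ((v-y : ℝ):ℂ) • P₂) * S := by
    rw [← hA, ← hB, ← Matrix.sub_mul, ← Matrix.mul_sub]
    congr 2
    push_cast
    module
  rw [hrep]
  exact conj_psd hS ((psd_smul hP₁ (by linarith)).add (psd_smul hP₂ (by linarith)))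
/-- Suppose `ρ₁₂ ≠ 0`. If either (`C₁ ≤ 1/2 < C₂` and
`q₀⁽⁰⁾ < q < q₀⁽¹⁾`) or (`1/2 < C₁` and `C₁ < q < q₀⁽¹⁾`), then every POVM
attaining `P̄_cor^opt(q)` has `M₁ = 0`. -/
theorem stmt18
    (q₁ q₂ : ℝ) (ρ₁ ρ₂ : Matrix (Fin 2) (Fin 2) ℂ)
    (hq₁ : 0 < q₁) (hq₂ : 0 < q₂) (hq : q₁ + q₂ = 1)
    (hρ₁ : ρ₁.PosSemidef) (htr₁ : ρ₁.trace = 1)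
    (hρ₂ : ρ₂.PosSemidef) (htr₂ : ρ₂.trace = 1)
    (hρ0 : (rho0 q₁ q₂ ρ₁ ρ₂).PosDef)
    (S : Matrix (Fin 2) (Fin 2) ℂ) (hS : S.PosSemidef) (hSS : S * S = rho0 q₁ q₂ ρ₁ ρ₂)
    (ν₁ ν₂ : Fin 2 → ℂ)
    (hν₁ : star ν₁ ⬝ᵥ ν₁ = 1) (hν₂ : star ν₂ ⬝ᵥ ν₂ = 1) (hν₁₂ : star ν₁ ⬝ᵥ ν₂ = 0)
    (C₁ C₂ : ℝ) (hC12 : C₁ ≤ C₂) (hCsum : 1 < C₁ + C₂)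
    (hbar₁ : S * ((C₁ : ℂ) • vecMulVec ν₁ (star ν₁)
        + ((1 - C₂ : ℝ) : ℂ) • vecMulVec ν₂ (star ν₂)) * S = (q₁ : ℂ) • ρ₁)
    (hbar₂ : S * (((1 - C₁ : ℝ) : ℂ) • vecMulVec ν₁ (star ν₁)
        + (C₂ : ℂ) • vecMulVec ν₂ (star ν₂)) * S = (q₂ : ℂ) • ρ₂)
    (ρ11 ρ22 : ℝ) (ρ12 : ℂ)
    (h11 : (ρ11 : ℂ) = star ν₁ ⬝ᵥ (rho0 q₁ q₂ ρ₁ ρ₂ *ᵥ ν₁))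
    (h22 : (ρ22 : ℂ) = star ν₂ ⬝ᵥ (rho0 q₁ q₂ ρ₁ ρ₂ *ᵥ ν₂))
    (h12 : ρ12 = star ν₁ ⬝ᵥ (rho0 q₁ q₂ ρ₁ ρ₂ *ᵥ ν₂))
    (h12nz : ρ12 ≠ 0) (q : ℝ)
    (hcase : (C₁ ≤ 1 / 2 ∧ 1 / 2 < C₂ ∧ q0low q₁ q₂ ρ₁ ρ₂ < q ∧ q < q0high q₁ q₂ ρ₁ ρ₂)
      ∨ (1 / 2 < C₁ ∧ C₁ < q ∧ q < q0high q₁ q₂ ρ₁ ρ₂)) :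
    ∀ M₀ M₁ M₂ : Matrix (Fin 2) (Fin 2) ℂ, IsPOVM M₀ M₁ M₂ →
      PbarCor q q₁ q₂ ρ₁ ρ₂ M₀ M₁ M₂ = PbarOpt q q₁ q₂ ρ₁ ρ₂ → M₁ = 0 := by
  intro M₀ M₁ M₂ hP hopt
  by_contra hM₁ne
  obtain ⟨hP0, hP1, hP2, hPsumM⟩ := hP
  have hSH : S.IsHermitian := hS.1
  have hP₁p := vecMulVec_psd ν₁
  have hP₂p := vecMulVec_psd ν₂
  have hPsum := resolution hν₁ hν₂ hν₁₂
  have hC₂half : (1:ℝ)/2 < C₂ := by rcases hcase with ⟨_,h,_⟩|⟨h,_,_⟩ <;> linarith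
  -- conjugation representation of c • ρ₀
  have hcρ : ∀ c : ℝ, S * ((c:ℂ) • vecMulVec ν₁ (star ν₁) + (c:ℂ) • vecMulVec ν₂ (star ν₂)) * S
      = (c:ℂ) • rho0 q₁ q₂ ρ₁ ρ₂ := by
    intro c
    rw [← smul_add, hPsum, Matrix.mul_smul, Matrix.mul_one, Matrix.smul_mul, hSS]
  -- real trace facts
  have tr_nonneg : ∀ {ρ M : Mat}, ρ.PosSemidef → M.PosSemidef → 0 ≤ ((ρ * M).trace).re :=
    fun hρ hM => re_nonneg_of_nonneg (trace_mul_psd_nonneg hρ hM)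
  have tr_le_tr : ∀ {ρ M : Mat}, ρ.PosSemidef → (1 - M).PosSemidef →
      ((ρ * M).trace).re ≤ (ρ.trace).re := by
    intro ρ M hρ h1M
    have h := re_nonneg_of_nonneg (trace_mul_psd_nonneg hρ h1M)
    rw [Matrix.mul_sub, Matrix.trace_sub, Matrix.mul_one, Complex.sub_re] at h
    linarith
  have htrρ0 : ((rho0 q₁ q₂ ρ₁ ρ₂).trace).re = 1 := by
    have h' : (rho0 q₁ q₂ ρ₁ ρ₂).trace = ((q₁:ℂ) * 1 + (q₂:ℂ) * 1) := by
      rw [rho0, Matrix.trace_add, Matrix.trace_smul, Matrix.trace_smul, htr₁, htr₂,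
        smul_eq_mul, smul_eq_mul]
    rw [h']
    simp only [mul_one, Complex.add_re, Complex.ofReal_re]
    exact hq
  -- the inequalities
  have ineq₁ : ∀ (c : ℝ), C₁ ≤ c → 1 - C₂ ≤ c → ∀ {M : Mat}, M.PosSemidef →
      q₁ * ((ρ₁ * M).trace).re ≤ c * (((rho0 q₁ q₂ ρ₁ ρ₂) * M).trace).re := by
    intro c hx hy M hM
    rw [← smul_trace_re q₁ ρ₁ M, ← smul_trace_re c]
    exact rep_trace_mono hSH hP₁p hP₂p hbar₁ (hcρ c) hx hy hM
  have ineq₂ : ∀ (c : ℝ), 1 - C₁ ≤ c → C₂ ≤ c → ∀ {M : Mat}, M.PosSemidef →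
      q₂ * ((ρ₂ * M).trace).re ≤ c * (((rho0 q₁ q₂ ρ₁ ρ₂) * M).trace).re := by
    intro c hx hy M hM
    rw [← smul_trace_re q₂ ρ₂ M, ← smul_trace_re c]
    exact rep_trace_mono hSH hP₁p hP₂p hbar₂ (hcρ c) hx hy hM
  have ineq₀₂ : ∀ (c : ℝ), c ≤ 1 - C₁ → c ≤ C₂ → ∀ {M : Mat}, M.PosSemidef →
      c * (((rho0 q₁ q₂ ρ₁ ρ₂) * M).trace).re ≤ q₂ * ((ρ₂ * M).trace).re := by
    intro c hx hy M hM
    rw [← smul_trace_re q₂ ρ₂ M, ← smul_trace_re c]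
    exact rep_trace_mono hSH hP₁p hP₂p (hcρ c) hbar₂ hx hy hM
  have ineq₁₂ : C₁ ≤ 1/2 → ∀ {M : Mat}, M.PosSemidef →
      q₁ * ((ρ₁ * M).trace).re ≤ q₂ * ((ρ₂ * M).trace).re := by
    intro hC M hM
    rw [← smul_trace_re q₁ ρ₁ M, ← smul_trace_re q₂ ρ₂ M]
    exact rep_trace_mono hSH hP₁p hP₂p hbar₁ hbar₂ (by linarith) (by linarith) hM
  -- uniform bound and boundedness of the optimization set
  have hbound : ∀ (q' : ℝ) (N₀ N₁ N₂ : Mat), IsPOVM N₀ N₁ N₂ →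
      PbarCor q' q₁ q₂ ρ₁ ρ₂ N₀ N₁ N₂ ≤ |q'| + 1 := by
    rintro q' N₀ N₁ N₂ ⟨h0, h1, h2, hsum⟩
    have h1sub0 : (1 - N₀).PosSemidef := by
      have : 1 - N₀ = N₁ + N₂ := by rw [← hsum]; abel
      rw [this]; exact h1.add h2
    have h1sub1 : (1 - N₁).PosSemidef := by
      have : 1 - N₁ = N₀ + N₂ := by rw [← hsum]; abel
      rw [this]; exact h0.add h2
    have h1sub2 : (1 - N₂).PosSemidef := by
      have : 1 - N₂ = N₀ + N₁ := by rw [← hsum]; abel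
      rw [this]; exact h0.add h1
    have e0 := tr_nonneg hρ0.posSemidef h0
    have e0' := tr_le_tr hρ0.posSemidef h1sub0
    rw [htrρ0] at e0'
    have e1 := tr_nonneg hρ₁ h1
    have e1' := tr_le_tr hρ₁ h1sub1
    rw [htr₁] at e1'
    norm_num at e1'
    have e2 := tr_nonneg hρ₂ h2
    have e2' := tr_le_tr hρ₂ h1sub2
    rw [htr₂] at e2'
    norm_num at e2'
    simp only [PbarCor, PIof, Pcor]
    have habs : q' * ((rho0 q₁ q₂ ρ₁ ρ₂ * N₀).trace).re ≤ |q'| := by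
      calc q' * ((rho0 q₁ q₂ ρ₁ ρ₂ * N₀).trace).re
          ≤ |q'| * ((rho0 q₁ q₂ ρ₁ ρ₂ * N₀).trace).re :=
            mul_le_mul_of_nonneg_right (le_abs_self q') e0
        _ ≤ |q'| * 1 := mul_le_mul_of_nonneg_left e0' (abs_nonneg q')
        _ = |q'| := mul_one _
    nlinarith [mul_le_mul_of_nonneg_left e1' hq₁.le, mul_le_mul_of_nonneg_left e2' hq₂.le,
      mul_nonneg hq₁.le e1, mul_nonneg hq₂.le e2]
  have hbdd : ∀ q' : ℝ, BddAbove {x : ℝ | ∃ N₀ N₁ N₂, IsPOVM N₀ N₁ N₂ ∧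
      PbarCor q' q₁ q₂ ρ₁ ρ₂ N₀ N₁ N₂ = x} := by
    intro q'
    refine ⟨|q'| + 1, ?_⟩
    rintro x ⟨N₀, N₁, N₂, hN, rfl⟩
    exact hbound q' N₀ N₁ N₂ hN
  have trivPOVM : IsPOVM 1 0 0 :=
    ⟨Matrix.PosSemidef.one, Matrix.PosSemidef.zero, Matrix.PosSemidef.zero, by
      rw [add_zero, add_zero]⟩
  have valtriv : ∀ q' : ℝ, PbarCor q' q₁ q₂ ρ₁ ρ₂ 1 0 0 = q' := by
    intro q'
    simp [PbarCor, PIof, Pcor, htrρ0]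
  have POVM001 : IsPOVM 0 0 1 :=
    ⟨Matrix.PosSemidef.zero, Matrix.PosSemidef.zero, Matrix.PosSemidef.one, by
      rw [add_zero, zero_add]⟩
  have val001 : ∀ q' : ℝ, PbarCor q' q₁ q₂ ρ₁ ρ₂ 0 0 1 = q₂ := by
    intro q'
    have h2re : (ρ₂.trace).re = 1 := by rw [htr₂]; norm_num
    simp [PbarCor, PIof, Pcor, h2re]
  have hself : ∀ q' : ℝ, q' ≤ PbarOpt q' q₁ q₂ ρ₁ ρ₂ := by
    intro q'
    exact le_csSup (hbdd q') ⟨1, 0, 0, trivPOVM, valtriv q'⟩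
  -- q > C₁ in both cases
  have hqC : C₁ < q := by
    rcases hcase with ⟨hC₁le, hC₂gt, hlow, _⟩ | ⟨hC₁gt, hqC₁, _⟩
    · -- show 1/2 ≤ q0low
      have hopt_half : PbarOpt (1/2) q₁ q₂ ρ₁ ρ₂ = q₂ := by
        apply le_antisymm
        · refine csSup_le ⟨q₂, ⟨0, 0, 1, POVM001, val001 _⟩⟩ ?_
          rintro x ⟨N₀, N₁, N₂, ⟨h0, h1, h2, hsum⟩, rfl⟩
          have i0 : (1/2 : ℝ) * (((rho0 q₁ q₂ ρ₁ ρ₂) * N₀).trace).re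
              ≤ q₂ * ((ρ₂ * N₀).trace).re := ineq₀₂ (1/2) (by linarith) (by linarith) h0
          have i1 : q₁ * ((ρ₁ * N₁).trace).re ≤ q₂ * ((ρ₂ * N₁).trace).re := ineq₁₂ hC₁le h1
          have isum : ((ρ₂ * N₀).trace).re + ((ρ₂ * N₁).trace).re + ((ρ₂ * N₂).trace).re
              = 1 := by
            have hmm : ρ₂ * N₀ + ρ₂ * N₁ + ρ₂ * N₂ = ρ₂ := by
              rw [← Matrix.mul_add, ← Matrix.mul_add, hsum, Matrix.mul_one]
            have := congrArg (fun X : Mat => (X.trace).re) hmm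
            simpa [Matrix.trace_add, Complex.add_re, htr₂] using this
          simp only [PbarCor, PIof, Pcor]
          have hsum' : q₂ * ((ρ₂ * N₀).trace).re + q₂ * ((ρ₂ * N₁).trace).re
              + q₂ * ((ρ₂ * N₂).trace).re = q₂ := by
            linear_combination q₂ * isum
          linarith
        · exact le_csSup (hbdd _) ⟨0, 0, 1, POVM001, val001 _⟩
      have hmemhalf : (1/2 : ℝ) ∈ {q' : ℝ | 0 < q' ∧ (0:ℝ) ∈ PIset q' q₁ q₂ ρ₁ ρ₂} := by
        refine ⟨by norm_num, ⟨0, 0, 1, POVM001, ?_, ?_⟩⟩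
        · rw [val001, hopt_half]
        · simp [PIof]
      have hbddlow : BddAbove {q' : ℝ | 0 < q' ∧ (0:ℝ) ∈ PIset q' q₁ q₂ ρ₁ ρ₂} := by
        refine ⟨C₂, ?_⟩
        rintro q' ⟨hq'pos, N₀, N₁, N₂, ⟨h0, h1, h2, hsum⟩, hNopt, hNPI⟩
        have hq'le : q' ≤ PbarOpt q' q₁ q₂ ρ₁ ρ₂ := hself q'
        have i1 : q₁ * ((ρ₁ * N₁).trace).re
            ≤ C₂ * (((rho0 q₁ q₂ ρ₁ ρ₂) * N₁).trace).re :=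
          ineq₁ C₂ hC12 (by linarith) h1
        have i2 : q₂ * ((ρ₂ * N₂).trace).re
            ≤ C₂ * (((rho0 q₁ q₂ ρ₁ ρ₂) * N₂).trace).re :=
          ineq₂ C₂ (by linarith) le_rfl h2
        have isum : (((rho0 q₁ q₂ ρ₁ ρ₂) * N₀).trace).re
            + (((rho0 q₁ q₂ ρ₁ ρ₂) * N₁).trace).re
            + (((rho0 q₁ q₂ ρ₁ ρ₂) * N₂).trace).re = 1 := by
          have hmm : rho0 q₁ q₂ ρ₁ ρ₂ * N₀ + rho0 q₁ q₂ ρ₁ ρ₂ * N₁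
              + rho0 q₁ q₂ ρ₁ ρ₂ * N₂ = rho0 q₁ q₂ ρ₁ ρ₂ := by
            rw [← Matrix.mul_add, ← Matrix.mul_add, hsum, Matrix.mul_one]
          have := congrArg (fun X : Mat => (X.trace).re) hmm
          simpa [Matrix.trace_add, Complex.add_re, htrρ0] using this
        simp only [PIof] at hNPI
        simp only [PbarCor, PIof, Pcor] at hNopt
        rw [hNPI] at hNopt isum
        have hsum' : C₂ * (((rho0 q₁ q₂ ρ₁ ρ₂) * N₁).trace).re
            + C₂ * (((rho0 q₁ q₂ ρ₁ ρ₂) * N₂).trace).re = C₂ := by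
          linear_combination C₂ * isum
        rw [← hNopt] at hq'le
        linarith
      have : (1/2 : ℝ) ≤ q0low q₁ q₂ ρ₁ ρ₂ := le_csSup hbddlow hmemhalf
      linarith
    · exact hqC₁
  -- positivity of tr(ρ₀ M₁)
  have hSSpd : (S * S).PosDef := by rw [hSS]; exact hρ0
  have htrS : (S * M₁ * S).trace = ((rho0 q₁ q₂ ρ₁ ρ₂) * M₁).trace := by
    rw [← hSS, Matrix.mul_assoc, Matrix.trace_mul_comm, Matrix.mul_assoc,
      Matrix.trace_mul_comm M₁ (S * S)]
  have ht1pos : 0 < (((rho0 q₁ q₂ ρ₁ ρ₂) * M₁).trace).re := by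
    rcases (tr_nonneg hρ0.posSemidef hP1).lt_or_eq with h | h
    · exact h
    · exfalso
      apply hM₁ne
      have hz : S * M₁ * S = 0 :=
        psd_eq_zero_of_trace (conj_psd hSH hP1) (by rw [htrS, ← h])
      exact conj_cancel hSSpd hz
  have hgain : q₁ * ((ρ₁ * M₁).trace).re ≤ C₁ * (((rho0 q₁ q₂ ρ₁ ρ₂) * M₁).trace).re :=
    ineq₁ C₁ le_rfl (by linarith) hP1
  -- the improved POVM
  have hPOVM' : IsPOVM (M₀ + M₁) 0 M₂ := by
    refine ⟨hP0.add hP1, Matrix.PosSemidef.zero, hP2, ?_⟩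
    rw [add_zero]; exact hPsumM
  have hval' : PbarCor q q₁ q₂ ρ₁ ρ₂ (M₀ + M₁) 0 M₂
      = PbarCor q q₁ q₂ ρ₁ ρ₂ M₀ M₁ M₂
        + q * (((rho0 q₁ q₂ ρ₁ ρ₂) * M₁).trace).re - q₁ * ((ρ₁ * M₁).trace).re := by
    simp only [PbarCor, PIof, Pcor, Matrix.mul_add, Matrix.trace_add, Complex.add_re,
      Matrix.mul_zero, Matrix.trace_zero, Complex.zero_re]
    ring
  have hle : PbarCor q q₁ q₂ ρ₁ ρ₂ (M₀ + M₁) 0 M₂ ≤ PbarOpt q q₁ q₂ ρ₁ ρ₂ :=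
    le_csSup (hbdd q) ⟨M₀ + M₁, 0, M₂, hPOVM', rfl⟩
  rw [hval', hopt] at hle
  nlinarith [mul_lt_mul_of_pos_right hqC ht1pos]



end FRIR
end
end

section
/- Suppose C_1 = C_2 = C, ρ_{12} ≠ 0, |ρ_{12}| ≤ ρ_{11} and |ρ_{12}| ≤ ρ_{22}. Then for every Q with 0 < Q < 2|ρ_{12}|, P_cor^opt(Q) = (1−Q)/2 + ((2C−1)/2)·√((1−2|ρ_{12}|)(1+2|ρ_{12}|−2Q)). -/
open Matrix ComplexOrder

set_option maxHeartbeats 1000000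

noncomputable section

namespace FRIR

/-! ### Auxiliary lemmas -/

/-- 2×2 matrix with real diagonal and off-diagonal `t•w`, `t•(conj w)`. -/
def mk2 (w : ℂ) (a b t : ℝ) : Matrix (Fin 2) (Fin 2) ℂ :=
  !![(a : ℂ), (t : ℂ) * w; (t : ℂ) * (starRingEnd ℂ) w, (b : ℂ)]

lemma mk2_herm (w : ℂ) (a b t : ℝ) : (mk2 w a b t).IsHermitian := by
  unfold Matrix.IsHermitian
  ext i j
  fin_cases i <;> fin_cases j <;>
    simp [mk2, Matrix.conjTranspose_apply, Complex.conj_ofReal, mul_comm]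

lemma psd2 {w : ℂ} (hw : w * (starRingEnd ℂ) w = 1) (a b t : ℝ)
    (ha : 0 ≤ a) (hb : 0 ≤ b) (h : t ^ 2 ≤ a * b) : (mk2 w a b t).PosSemidef := by
  refine Matrix.PosSemidef.of_dotProduct_mulVec_nonneg (mk2_herm w a b t) fun x => ?_
  have hns : Complex.normSq w = 1 := by
    have h' : ((Complex.normSq w : ℝ) : ℂ) = 1 := by rw [← Complex.mul_conj]; exact hw
    exact_mod_cast h'
  have habs : ‖w‖ = 1 := by
    have h2 : ‖w‖ ^ 2 = 1 := by rw [Complex.sq_norm]; exact hns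
    nlinarith [norm_nonneg w]
  set p := x 0 with hp
  set q := x 1 with hq
  have hE : star x ⬝ᵥ (mk2 w a b t *ᵥ x)
      = (a : ℂ) * ((starRingEnd ℂ) p * p) + (b : ℂ) * ((starRingEnd ℂ) q * q)
        + ((t : ℂ) * (w * (starRingEnd ℂ) p * q)
          + (starRingEnd ℂ) ((t : ℂ) * (w * (starRingEnd ℂ) p * q))) := by
    simp [mk2, dotProduct, Matrix.mulVec, Fin.sum_univ_two, Complex.star_def,
      Complex.conj_ofReal]
    ring
  rw [hE]
  have h1 : (starRingEnd ℂ) p * p = (Complex.normSq p : ℂ) := by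
    rw [Complex.normSq_eq_conj_mul_self]
  have h2 : (starRingEnd ℂ) q * q = (Complex.normSq q : ℂ) := by
    rw [Complex.normSq_eq_conj_mul_self]
  set z : ℂ := (t : ℂ) * (w * (starRingEnd ℂ) p * q) with hz
  have h3 : z + (starRingEnd ℂ) z = ((2 * z.re : ℝ) : ℂ) := by
    rw [Complex.add_conj]
  rw [h1, h2, h3]
  have : (a : ℂ) * (Complex.normSq p : ℂ) + (b : ℂ) * (Complex.normSq q : ℂ)
      + ((2 * z.re : ℝ) : ℂ)
      = ((a * Complex.normSq p + b * Complex.normSq q + 2 * z.re : ℝ) : ℂ) := by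
    push_cast; ring
  rw [this]
  rw [Complex.zero_le_real]
  have hzabs : ‖z‖ = |t| * (‖p‖ * ‖q‖) := by
    rw [hz, norm_mul, norm_mul, norm_mul, Complex.norm_conj,
      Complex.norm_real, Real.norm_eq_abs, habs]
    ring
  have hre : -(|t| * (‖p‖ * ‖q‖)) ≤ z.re := by
    have := Complex.abs_re_le_norm z
    rw [hzabs] at this
    cases' abs_le.mp this with h' _
    linarith [h']
  have hP : Complex.normSq p = ‖p‖ ^ 2 := (Complex.sq_norm p).symm
  have hQ : Complex.normSq q = ‖q‖ ^ 2 := (Complex.sq_norm q).symm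
  rw [hP, hQ]
  set X := ‖p‖
  set Y := ‖q‖
  have hX : 0 ≤ X := norm_nonneg p
  have hY : 0 ≤ Y := norm_nonneg q
  have key : 2 * |t| * (X * Y) ≤ a * X ^ 2 + b * Y ^ 2 := by
    have hsq : (2 * |t| * (X * Y)) ^ 2 ≤ (a * X ^ 2 + b * Y ^ 2) ^ 2 := by
      nlinarith [sq_nonneg (a * X ^ 2 - b * Y ^ 2), sq_abs t, sq_nonneg (X * Y),
        mul_nonneg (mul_nonneg hX hY) (mul_nonneg hX hY)]
    have h2t : 0 ≤ 2 * |t| * (X * Y) := by positivity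
    have hrhs : 0 ≤ a * X ^ 2 + b * Y ^ 2 := by positivity
    nlinarith [hsq, h2t, hrhs]
  linarith [hre]

open scoped MatrixOrder in
/-- trace of product of two PSD matrices has nonneg real part -/
lemma trace_mul_psd_nonneg_s19 {n : Type*} [Fintype n] [DecidableEq n]
    {A B : Matrix n n ℂ} (hA : A.PosSemidef) (hB : B.PosSemidef) :
    0 ≤ (Matrix.trace (A * B)).re := by
  have hs : (CFC.sqrt B).PosSemidef := (CFC.sqrt_nonneg B).posSemidef
  have hmul : CFC.sqrt B * CFC.sqrt B = B := CFC.sqrt_mul_sqrt_self B hB.nonneg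
  have h1 : A * B = A * CFC.sqrt B * CFC.sqrt B := by rw [Matrix.mul_assoc, hmul]
  have h2 : Matrix.trace (A * CFC.sqrt B * CFC.sqrt B) = Matrix.trace (CFC.sqrt B * (A * CFC.sqrt B)) :=
    Matrix.trace_mul_comm _ _
  have h3 : CFC.sqrt B * (A * CFC.sqrt B) = CFC.sqrt B * A * (CFC.sqrt B)ᴴ := by
    rw [hs.isHermitian.eq, Matrix.mul_assoc]
  have hpsd : (CFC.sqrt B * A * (CFC.sqrt B)ᴴ).PosSemidef := hA.mul_mul_conjTranspose_same _
  have htr : 0 ≤ Matrix.trace (CFC.sqrt B * A * (CFC.sqrt B)ᴴ) := by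
    rw [Matrix.trace]
    apply Finset.sum_nonneg
    intro i _
    have := hpsd.dotProduct_mulVec_nonneg (Pi.single i 1)
    simpa [Matrix.diag, dotProduct, Matrix.mulVec, Pi.single_apply] using this
  rw [h1, h2, h3]
  exact (Complex.le_def.mp htr).1

/-- matrix with columns ν₁ ν₂ -/
def bmat (ν₁ ν₂ : Fin 2 → ℂ) : Matrix (Fin 2) (Fin 2) ℂ :=
  Matrix.of fun i j => ![ν₁, ν₂] j i

section basis
variable {ν₁ ν₂ : Fin 2 → ℂ}
  (hν₁ : star ν₁ ⬝ᵥ ν₁ = 1) (hν₂ : star ν₂ ⬝ᵥ ν₂ = 1) (hν₁₂ : star ν₁ ⬝ᵥ ν₂ = 0)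

include hν₁ hν₂ hν₁₂ in
lemma bmat_unitary : (bmat ν₁ ν₂)ᴴ * bmat ν₁ ν₂ = 1 := by
  have e1 : (starRingEnd ℂ) (ν₁ 0) * ν₁ 0 + (starRingEnd ℂ) (ν₁ 1) * ν₁ 1 = 1 := by
    simpa [dotProduct, Fin.sum_univ_two, Complex.star_def] using hν₁
  have e2 : (starRingEnd ℂ) (ν₂ 0) * ν₂ 0 + (starRingEnd ℂ) (ν₂ 1) * ν₂ 1 = 1 := by
    simpa [dotProduct, Fin.sum_univ_two, Complex.star_def] using hν₂
  have e3 : (starRingEnd ℂ) (ν₁ 0) * ν₂ 0 + (starRingEnd ℂ) (ν₁ 1) * ν₂ 1 = 0 := by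
    simpa [dotProduct, Fin.sum_univ_two, Complex.star_def] using hν₁₂
  have e4 : (starRingEnd ℂ) (ν₂ 0) * ν₁ 0 + (starRingEnd ℂ) (ν₂ 1) * ν₁ 1 = 0 := by
    have := congrArg (starRingEnd ℂ) e3
    simp only [map_add, _root_.map_mul, Complex.conj_conj, map_zero] at this
    linear_combination this
  ext i j
  fin_cases i <;> fin_cases j <;>
    simp [bmat, Matrix.mul_apply, Fin.sum_univ_two, Matrix.conjTranspose_apply,
      Complex.star_def, Matrix.one_apply] <;>
    first
    | linear_combination e1
    | linear_combination e2
    | linear_combination e3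
    | linear_combination e4

lemma bmat_expand (X : Matrix (Fin 2) (Fin 2) ℂ) :
    bmat ν₁ ν₂ * X * (bmat ν₁ ν₂)ᴴ
      = X 0 0 • vecMulVec ν₁ (star ν₁) + X 0 1 • vecMulVec ν₁ (star ν₂)
        + X 1 0 • vecMulVec ν₂ (star ν₁) + X 1 1 • vecMulVec ν₂ (star ν₂) := by
  ext i j
  simp [bmat, Matrix.mul_apply, Fin.sum_univ_two, Matrix.conjTranspose_apply,
    Matrix.vecMulVec_apply, Complex.star_def]
  ring

lemma bmat_entry (A : Matrix (Fin 2) (Fin 2) ℂ) (a b : Fin 2) :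
    ((bmat ν₁ ν₂)ᴴ * A * bmat ν₁ ν₂) a b = star (![ν₁, ν₂] a) ⬝ᵥ (A *ᵥ ![ν₁, ν₂] b) := by
  fin_cases a <;> fin_cases b <;>
    · simp [bmat, Matrix.mul_apply, Fin.sum_univ_two, Matrix.conjTranspose_apply,
        dotProduct, Matrix.mulVec, Complex.star_def]
      ring

end basis


lemma key_aux (x y ga d : ℝ) (hd2 : d ^ 2 = (x + y) ^ 2 - 4 * ga ^ 2) :
    (ga * (d + (x - y))) ^ 2
      = (x * d + (x * (x + y) - 2 * ga ^ 2)) * (y * d + (2 * ga ^ 2 - y * (x + y))) := by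
  linear_combination (-(x * y - ga ^ 2)) * hd2

lemma psd_aux (x y ga d : ℝ) (hx : 0 ≤ x) (hd : 0 < d) (hN : ga ^ 2 ≤ x * y)
    (hd2 : d ^ 2 = (x + y) ^ 2 - 4 * ga ^ 2) :
    0 ≤ x * d + (x * (x + y) - 2 * ga ^ 2) ∧ 0 ≤ x * d - (x * (x + y) - 2 * ga ^ 2) := by
  have h0 : 0 ≤ x * d := mul_nonneg hx hd.le
  have hxd2 : (x * d) ^ 2 = x ^ 2 * ((x + y) ^ 2 - 4 * ga ^ 2) := by rw [← hd2]; ring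
  have hsq : (x * (x + y) - 2 * ga ^ 2) ^ 2 ≤ (x * d) ^ 2 := by
    nlinarith [mul_nonneg (sq_nonneg ga) (sub_nonneg.mpr hN), hxd2]
  constructor
  · rcases le_or_gt (2 * ga ^ 2) (x * (x + y)) with hc | hc
    · linarith
    · nlinarith [hsq, h0]
  · rcases le_or_gt (x * (x + y)) (2 * ga ^ 2) with hc | hc
    · linarith
    · nlinarith [hsq, h0]

/-- If `C₁ = C₂ = C`, `ρ₁₂ ≠ 0`, `|ρ₁₂| ≤ ρ₁₁` and `|ρ₁₂| ≤ ρ₂₂`,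
then for `0 < Q < 2|ρ₁₂|`,
`P_cor^opt(Q) = (1−Q)/2 + ((2C−1)/2)√((1−2|ρ₁₂|)(1+2|ρ₁₂|−2Q))`. -/
theorem stmt19
    (q₁ q₂ : ℝ) (ρ₁ ρ₂ : Matrix (Fin 2) (Fin 2) ℂ)
    (hq₁ : 0 < q₁) (hq₂ : 0 < q₂) (hq : q₁ + q₂ = 1)
    (hρ₁ : ρ₁.PosSemidef) (htr₁ : ρ₁.trace = 1)
    (hρ₂ : ρ₂.PosSemidef) (htr₂ : ρ₂.trace = 1)
    (hρ0 : (rho0 q₁ q₂ ρ₁ ρ₂).PosDef)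
    (S : Matrix (Fin 2) (Fin 2) ℂ) (hS : S.PosSemidef) (hSS : S * S = rho0 q₁ q₂ ρ₁ ρ₂)
    (ν₁ ν₂ : Fin 2 → ℂ)
    (hν₁ : star ν₁ ⬝ᵥ ν₁ = 1) (hν₂ : star ν₂ ⬝ᵥ ν₂ = 1) (hν₁₂ : star ν₁ ⬝ᵥ ν₂ = 0)
    (C₁ C₂ : ℝ) (hC12 : C₁ ≤ C₂) (hCsum : 1 < C₁ + C₂)
    (hbar₁ : S * ((C₁ : ℂ) • vecMulVec ν₁ (star ν₁)
        + ((1 - C₂ : ℝ) : ℂ) • vecMulVec ν₂ (star ν₂)) * S = (q₁ : ℂ) • ρ₁)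
    (hbar₂ : S * (((1 - C₁ : ℝ) : ℂ) • vecMulVec ν₁ (star ν₁)
        + (C₂ : ℂ) • vecMulVec ν₂ (star ν₂)) * S = (q₂ : ℂ) • ρ₂)
    (ρ11 ρ22 : ℝ) (ρ12 : ℂ)
    (h11 : (ρ11 : ℂ) = star ν₁ ⬝ᵥ (rho0 q₁ q₂ ρ₁ ρ₂ *ᵥ ν₁))
    (h22 : (ρ22 : ℂ) = star ν₂ ⬝ᵥ (rho0 q₁ q₂ ρ₁ ρ₂ *ᵥ ν₂))
    (h12 : ρ12 = star ν₁ ⬝ᵥ (rho0 q₁ q₂ ρ₁ ρ₂ *ᵥ ν₂))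
    (hCeq : C₁ = C₂) (h12nz : ρ12 ≠ 0)
    (h1 : ‖ρ12‖ ≤ ρ11) (h2 : ‖ρ12‖ ≤ ρ22) :
    ∀ Q : ℝ, 0 < Q → Q < 2 * ‖ρ12‖ →
      PcorOpt Q q₁ q₂ ρ₁ ρ₂ = (1 - Q) / 2 + ((2 * C₂ - 1) / 2)
        * Real.sqrt ((1 - 2 * ‖ρ12‖) * (1 + 2 * ‖ρ12‖ - 2 * Q)) := by
  intro Q hQ0 hQr
  obtain ⟨r, hrdef⟩ : ∃ x : ℝ, x = ‖ρ12‖ := ⟨_, rfl⟩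
  rw [← hrdef] at hQr h1 h2 ⊢
  have hr0 : 0 < r := by
    rw [hrdef]; exact norm_pos_iff.mpr h12nz
  obtain ⟨w, hwdef⟩ : ∃ x : ℂ, x = ρ12 / (r : ℂ) := ⟨_, rfl⟩
  have hrne : ((r : ℝ) : ℂ) ≠ 0 := by exact_mod_cast hr0.ne'
  have hrw : ((r : ℝ) : ℂ) * w = ρ12 := by
    rw [hwdef]; field_simp
  have hw : w * (starRingEnd ℂ) w = 1 := by
    have habs2 : ρ12 * (starRingEnd ℂ) ρ12 = ((r ^ 2 : ℝ) : ℂ) := by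
      rw [Complex.mul_conj]
      norm_cast
      rw [hrdef, ← Complex.sq_norm]
    rw [hwdef]
    rw [map_div₀]
    rw [Complex.conj_ofReal]
    field_simp
    rw [Complex.ofReal_pow] at habs2
    linear_combination habs2
  -- the unitary of basis vectors
  set U : Matrix (Fin 2) (Fin 2) ℂ := bmat ν₁ ν₂ with hUdef
  have hU1 : Uᴴ * U = 1 := bmat_unitary hν₁ hν₂ hν₁₂
  have hU2 : U * Uᴴ = 1 := mul_eq_one_comm.mp hU1
  have hUcan : ∀ Z : Matrix (Fin 2) (Fin 2) ℂ, Uᴴ * (U * Z) = Z := by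
    intro Z; rw [← Matrix.mul_assoc, hU1, Matrix.one_mul]
  have hmulU : ∀ X Y : Matrix (Fin 2) (Fin 2) ℂ,
      (U * X * Uᴴ) * (U * Y * Uᴴ) = U * (X * Y) * Uᴴ := by
    intro X Y
    simp only [Matrix.mul_assoc]
    rw [hUcan (Y * Uᴴ)]
  have htrU : ∀ X : Matrix (Fin 2) (Fin 2) ℂ, Matrix.trace (U * X * Uᴴ) = Matrix.trace X := by
    intro X
    rw [Matrix.trace_mul_comm, ← Matrix.mul_assoc, hU1, Matrix.one_mul]
  -- the coordinate matrix of ρ0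
  set R : Matrix (Fin 2) (Fin 2) ℂ := mk2 w ρ11 ρ22 r with hRdef
  have hρ0H : (rho0 q₁ q₂ ρ₁ ρ₂)ᴴ = rho0 q₁ q₂ ρ₁ ρ₂ := hρ0.isHermitian.eq
  have h21 : star ν₂ ⬝ᵥ (rho0 q₁ q₂ ρ₁ ρ₂ *ᵥ ν₁) = (starRingEnd ℂ) ρ12 := by
    rw [h12, Matrix.star_dotProduct, Matrix.star_mulVec, hρ0H, ← Matrix.dotProduct_mulVec]
    rfl
  have hcoord : Uᴴ * rho0 q₁ q₂ ρ₁ ρ₂ * U = R := by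
    ext a b
    rw [hUdef, bmat_entry]
    fin_cases a <;> fin_cases b
    · simpa [hRdef, mk2] using h11.symm
    · simp only [Fin.mk_zero, Fin.mk_one, hRdef, mk2, Matrix.cons_val', Matrix.cons_val_zero,
        Matrix.cons_val_one, Matrix.head_cons, Matrix.empty_val', Matrix.cons_val_fin_one,
        Matrix.head_fin_const]
      rw [hrw]
      exact (h12).symm
    · simp only [Fin.mk_zero, Fin.mk_one, hRdef, mk2, Matrix.cons_val', Matrix.cons_val_zero,
        Matrix.cons_val_one, Matrix.head_cons, Matrix.empty_val', Matrix.cons_val_fin_one,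
        Matrix.head_fin_const]
      rw [h21, ← hrw, _root_.map_mul, Complex.conj_ofReal]
      simp
    · simpa [hRdef, mk2] using h22.symm
  have hρ0c : rho0 q₁ q₂ ρ₁ ρ₂ = U * R * Uᴴ := by
    rw [← hcoord]
    calc rho0 q₁ q₂ ρ₁ ρ₂ = (U * Uᴴ) * rho0 q₁ q₂ ρ₁ ρ₂ * (U * Uᴴ) := by
          rw [hU2, Matrix.one_mul, Matrix.mul_one]
    _ = U * (Uᴴ * rho0 q₁ q₂ ρ₁ ρ₂ * U) * Uᴴ := by
          simp only [Matrix.mul_assoc]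

  -- trace of rho0 is 1, hence ρ11 + ρ22 = 1
  have htrρ0 : Matrix.trace (rho0 q₁ q₂ ρ₁ ρ₂) = 1 := by
    unfold rho0
    rw [Matrix.trace_add, Matrix.trace_smul, Matrix.trace_smul, htr₁, htr₂]
    push_cast
    simp only [smul_eq_mul, mul_one]
    exact_mod_cast congrArg (fun x : ℝ => (x : ℂ)) hq
  have mk2_trace : ∀ a b t : ℝ, Matrix.trace (mk2 w a b t) = ((a + b : ℝ) : ℂ) := by
    intro a b t
    simp [mk2, Matrix.trace_fin_two]
  have hsum1 : ρ11 + ρ22 = 1 := by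
    have h' : Matrix.trace (rho0 q₁ q₂ ρ₁ ρ₂) = ((ρ11 + ρ22 : ℝ) : ℂ) := by
      rw [hρ0c, htrU, hRdef, mk2_trace]
    rw [htrρ0] at h'
    exact_mod_cast h'.symm
  -- determinant positivity gives r < 1/2
  have hdetR : r ^ 2 < ρ11 * ρ22 := by
    have hUdet : U.det * Uᴴ.det = 1 := by rw [← Matrix.det_mul, hU2, Matrix.det_one]
    have hdet1 : (rho0 q₁ q₂ ρ₁ ρ₂).det = R.det := by
      rw [hρ0c, Matrix.det_mul, Matrix.det_mul]
      linear_combination R.det * hUdet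
    have hRdet : R.det = ((ρ11 * ρ22 - r ^ 2 : ℝ) : ℂ) := by
      rw [hRdef]
      rw [show (mk2 w ρ11 ρ22 r).det
          = (ρ11 : ℂ) * (ρ22 : ℂ) - ((r : ℝ) : ℂ) * w * (((r : ℝ) : ℂ) * (starRingEnd ℂ) w) by
        simp [mk2, Matrix.det_fin_two]]
      push_cast
      linear_combination (-((r:ℂ) * (r:ℂ))) * hw
    have hpos := hρ0.det_pos
    rw [hdet1, hRdet] at hpos
    have : (0 : ℝ) < ρ11 * ρ22 - r ^ 2 := by exact_mod_cast hpos
    linarith only [this]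
  have h2r : 2 * r < 1 := by nlinarith only [sq_nonneg (ρ11 - ρ22), hdetR, hsum1, hr0]
  have hQ1 : Q < 1 := by linarith only [hQr, h2r]
  have hC : 1 < 2 * C₂ := by rw [hCeq] at hCsum; linarith only [hCsum]
  -- facts about S
  have hdetS : IsUnit S.det := by
    have hd : S.det * S.det = (rho0 q₁ q₂ ρ₁ ρ₂).det := by rw [← Matrix.det_mul, hSS]
    have hpos := hρ0.det_pos
    rw [← hd] at hpos
    have hne : S.det ≠ 0 := by
      intro h0
      rw [h0, mul_zero] at hpos
      exact lt_irrefl _ hpos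
    exact isUnit_iff_ne_zero.mpr hne
  have hS1 : S * S⁻¹ = 1 := Matrix.mul_nonsing_inv S hdetS
  have hS2 : S⁻¹ * S = 1 := Matrix.nonsing_inv_mul S hdetS
  have hSH : Sᴴ = S := hS.1
  have hSiH : S⁻¹ᴴ = S⁻¹ := by rw [Matrix.conjTranspose_nonsing_inv, hSH]
  have hSBS : ∀ B : Matrix (Fin 2) (Fin 2) ℂ, S * (S⁻¹ * B * S⁻¹) * S = B := by
    intro B
    calc S * (S⁻¹ * B * S⁻¹) * S = (S * S⁻¹) * (B * ((S⁻¹) * S)) := by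
          simp only [Matrix.mul_assoc]
    _ = B := by rw [hS1, hS2, Matrix.one_mul, Matrix.mul_one]
  have hrot : ∀ B M : Matrix (Fin 2) (Fin 2) ℂ,
      Matrix.trace (S * B * S * M) = Matrix.trace (B * (S * M * S)) := by
    intro B M
    calc Matrix.trace (S * B * S * M) = Matrix.trace (S * (B * (S * M))) := by
          simp only [Matrix.mul_assoc]
    _ = Matrix.trace ((B * (S * M)) * S) := Matrix.trace_mul_comm _ _
    _ = Matrix.trace (B * (S * M * S)) := by simp only [Matrix.mul_assoc]
  have htr2 : ∀ a b t a' b' t' : ℝ, Matrix.trace (mk2 w a b t * mk2 w a' b' t')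
      = ((a * a' + b * b' + 2 * (t * t') : ℝ) : ℂ) := by
    intro a b t a' b' t'
    rw [Matrix.trace_fin_two]
    simp [mk2, Matrix.mul_apply, Fin.sum_univ_two]
    push_cast
    linear_combination (2 * (t:ℂ) * (t':ℂ)) * hw
  -- real scalar layer
  obtain ⟨d, hddef⟩ : ∃ x : ℝ, x = Real.sqrt ((1 - 2 * r) * (1 + 2 * r - 2 * Q)) := ⟨_, rfl⟩
  have hΔ0 : 0 < (1 - 2 * r) * (1 + 2 * r - 2 * Q) :=
    mul_pos (by linarith only [h2r]) (by linarith only [h2r, hQr])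
  have hd0 : 0 < d := by rw [hddef]; exact Real.sqrt_pos.mpr hΔ0
  have hd2 : d ^ 2 = (1 - 2 * r) * (1 + 2 * r - 2 * Q) := by
    rw [hddef]; exact Real.sq_sqrt hΔ0.le
  have h2d0 : (0:ℝ) ≤ 2 * d := by linarith only [hd0]
  obtain ⟨al, haldef⟩ : ∃ x : ℝ, x = ρ11 - Q / 2 := ⟨_, rfl⟩
  obtain ⟨be, hbedef⟩ : ∃ x : ℝ, x = ρ22 - Q / 2 := ⟨_, rfl⟩
  obtain ⟨ga, hgadef⟩ : ∃ x : ℝ, x = r - Q / 2 := ⟨_, rfl⟩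
  have hal0 : 0 ≤ al := by rw [haldef]; linarith only [h1, hQr]
  have hbe0 : 0 ≤ be := by rw [hbedef]; linarith only [h2, hQr]
  have hga0 : 0 < ga := by rw [hgadef]; linarith only [hQr]
  have hsal : al + be = 1 - Q := by rw [haldef, hbedef]; linarith only [hsum1]
  have hd2ab : d ^ 2 = (al + be) ^ 2 - 4 * ga ^ 2 := by
    rw [hd2, haldef, hbedef, hgadef]
    linear_combination (-(ρ11 + ρ22 + 1 - 2 * Q)) * hsum1
  have hdN : ga ^ 2 ≤ al * be := by
    rw [haldef, hbedef, hgadef]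
    rw [show (ρ22:ℝ) = 1 - ρ11 from by linarith only [hsum1]]
    have h2' : r ≤ 1 - ρ11 := by linarith only [h2, hsum1]
    nlinarith only [mul_nonneg (sub_nonneg.mpr h1) (sub_nonneg.mpr h2'),
      mul_pos (show (0:ℝ) < 2 * r - Q by linarith only [hQr])
        (show (0:ℝ) < 1 - 2 * r by linarith only [h2r])]
  -- primal optimal coordinates (numerators over 2d)
  obtain ⟨nA00, hnA00⟩ : ∃ x : ℝ, x = al * d + (al * (al + be) - 2 * ga ^ 2) := ⟨_, rfl⟩
  obtain ⟨nA11, hnA11⟩ : ∃ x : ℝ, x = be * d + (2 * ga ^ 2 - be * (al + be)) := ⟨_, rfl⟩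
  obtain ⟨nA01, hnA01⟩ : ∃ x : ℝ, x = ga * (d + (al - be)) := ⟨_, rfl⟩
  obtain ⟨nB00, hnB00⟩ : ∃ x : ℝ, x = al * d - (al * (al + be) - 2 * ga ^ 2) := ⟨_, rfl⟩
  obtain ⟨nB11, hnB11⟩ : ∃ x : ℝ, x = be * d + (be * (al + be) - 2 * ga ^ 2) := ⟨_, rfl⟩
  obtain ⟨nB01, hnB01⟩ : ∃ x : ℝ, x = ga * (d - (al - be)) := ⟨_, rfl⟩
  have hd2ba : d ^ 2 = (be + al) ^ 2 - 4 * ga ^ 2 := by rw [hd2ab]; ring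
  have hdNba : ga ^ 2 ≤ be * al := by rw [mul_comm]; exact hdN
  have hpa := psd_aux al be ga d hal0 hd0 hdN hd2ab
  have hpb := psd_aux be al ga d hbe0 hd0 hdNba hd2ba
  have key1 : nA01 ^ 2 = nA00 * nA11 := by
    rw [hnA00, hnA11, hnA01]
    exact key_aux al be ga d hd2ab
  have key2 : nB01 ^ 2 = nB00 * nB11 := by
    rw [hnB00, hnB11, hnB01]
    have h' := key_aux be al ga d hd2ba
    linear_combination h'
  have hA00n : 0 ≤ nA00 := by rw [hnA00]; exact hpa.1
  have hA11n : 0 ≤ nA11 := by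
    rw [hnA11]
    have := hpb.2
    have e : be * d - (be * (be + al) - 2 * ga ^ 2) = be * d + (2 * ga ^ 2 - be * (al + be)) := by
      ring
    linarith [e ▸ this]
  have hB00n : 0 ≤ nB00 := by
    rw [hnB00]
    have := hpa.2
    linarith
  have hB11n : 0 ≤ nB11 := by
    rw [hnB11]
    have := hpb.1
    have e : be * d + (be * (be + al) - 2 * ga ^ 2) = be * d + (be * (al + be) - 2 * ga ^ 2) := by
      ring
    linarith [e ▸ this]
  obtain ⟨A00, hA00d⟩ : ∃ x : ℝ, x = nA00 / (2 * d) := ⟨_, rfl⟩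
  obtain ⟨A11, hA11d⟩ : ∃ x : ℝ, x = nA11 / (2 * d) := ⟨_, rfl⟩
  obtain ⟨A01, hA01d⟩ : ∃ x : ℝ, x = nA01 / (2 * d) := ⟨_, rfl⟩
  obtain ⟨B00, hB00d⟩ : ∃ x : ℝ, x = nB00 / (2 * d) := ⟨_, rfl⟩
  obtain ⟨B11, hB11d⟩ : ∃ x : ℝ, x = nB11 / (2 * d) := ⟨_, rfl⟩
  obtain ⟨B01, hB01d⟩ : ∃ x : ℝ, x = nB01 / (2 * d) := ⟨_, rfl⟩
  have hdne : (2 : ℝ) * d ≠ 0 := by linarith only [hd0]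
  have hA00p : 0 ≤ A00 := by rw [hA00d]; exact div_nonneg hA00n h2d0
  have hA11p : 0 ≤ A11 := by rw [hA11d]; exact div_nonneg hA11n h2d0
  have hB00p : 0 ≤ B00 := by rw [hB00d]; exact div_nonneg hB00n h2d0
  have hB11p : 0 ≤ B11 := by rw [hB11d]; exact div_nonneg hB11n h2d0
  have hA01sq : A01 ^ 2 ≤ A00 * A11 := by
    rw [hA00d, hA11d, hA01d]
    have e1 : (nA01 / (2 * d)) ^ 2 = nA01 ^ 2 / ((2 * d) * (2 * d)) := by ring
    have e2 : nA00 / (2 * d) * (nA11 / (2 * d)) = nA00 * nA11 / ((2 * d) * (2 * d)) := by ring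
    rw [e1, e2, key1]
  have hB01sq : B01 ^ 2 ≤ B00 * B11 := by
    rw [hB00d, hB11d, hB01d]
    have e1 : (nB01 / (2 * d)) ^ 2 = nB01 ^ 2 / ((2 * d) * (2 * d)) := by ring
    have e2 : nB00 / (2 * d) * (nB11 / (2 * d)) = nB00 * nB11 / ((2 * d) * (2 * d)) := by ring
    rw [e1, e2, key2]
  -- the three coordinate matrices of the optimal POVM
  set X0 : Matrix (Fin 2) (Fin 2) ℂ := mk2 w (Q/2) (Q/2) (Q/2) with hX0def
  set X1 : Matrix (Fin 2) (Fin 2) ℂ := mk2 w A00 A11 A01 with hX1def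
  set X2 : Matrix (Fin 2) (Fin 2) ℂ := mk2 w B00 B11 B01 with hX2def
  have hX0psd : X0.PosSemidef := psd2 hw _ _ _ (by linarith only [hQ0])
    (by linarith only [hQ0]) (le_of_eq (by ring))
  have hX1psd : X1.PosSemidef := psd2 hw _ _ _ hA00p hA11p hA01sq
  have hX2psd : X2.PosSemidef := psd2 hw _ _ _ hB00p hB11p hB01sq
  have mk2_add : ∀ a b t a' b' t' : ℝ,
      mk2 w a b t + mk2 w a' b' t' = mk2 w (a + a') (b + b') (t + t') := by
    intro a b t a' b' t'
    unfold mk2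
    ext i j
    fin_cases i <;> fin_cases j <;> (simp; try push_cast; try ring)
  have hs00 : Q / 2 + A00 + B00 = ρ11 := by
    have h' : A00 + B00 = al := by
      rw [hA00d, hB00d, hnA00, hnB00]
      field_simp
      ring
    rw [haldef] at h'
    linarith only [h']
  have hs11 : Q / 2 + A11 + B11 = ρ22 := by
    have h' : A11 + B11 = be := by
      rw [hA11d, hB11d, hnA11, hnB11]
      field_simp
      ring
    rw [hbedef] at h'
    linarith only [h']
  have hs01 : Q / 2 + A01 + B01 = r := by
    have h' : A01 + B01 = ga := by
      rw [hA01d, hB01d, hnA01, hnB01]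
      field_simp
      ring
    rw [hgadef] at h'
    linarith only [h']
  have hXsum : X0 + X1 + X2 = R := by
    rw [hX0def, hX1def, hX2def, hRdef, mk2_add, mk2_add, hs00, hs11, hs01]
  -- the optimal POVM
  set M0 : Matrix (Fin 2) (Fin 2) ℂ := S⁻¹ * (U * X0 * Uᴴ) * S⁻¹ with hM0def
  set M1 : Matrix (Fin 2) (Fin 2) ℂ := S⁻¹ * (U * X1 * Uᴴ) * S⁻¹ with hM1def
  set M2 : Matrix (Fin 2) (Fin 2) ℂ := S⁻¹ * (U * X2 * Uᴴ) * S⁻¹ with hM2def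
  have hMpsd : ∀ (X : Matrix (Fin 2) (Fin 2) ℂ), X.PosSemidef →
      (S⁻¹ * (U * X * Uᴴ) * S⁻¹).PosSemidef := by
    intro X hX
    have h' := (hX.mul_mul_conjTranspose_same U).mul_mul_conjTranspose_same S⁻¹
    rwa [hSiH] at h'
  have hMsum : M0 + M1 + M2 = 1 := by
    rw [hM0def, hM1def, hM2def]
    have h' : S⁻¹ * (U * X0 * Uᴴ) * S⁻¹ + S⁻¹ * (U * X1 * Uᴴ) * S⁻¹
        + S⁻¹ * (U * X2 * Uᴴ) * S⁻¹ = S⁻¹ * (U * (X0 + X1 + X2) * Uᴴ) * S⁻¹ := by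
      simp only [Matrix.mul_add, Matrix.add_mul]
    rw [h', hXsum, ← hρ0c, ← hSS]
    calc S⁻¹ * (S * S) * S⁻¹ = (S⁻¹ * S) * (S * S⁻¹) := by simp only [Matrix.mul_assoc]
    _ = 1 := by rw [hS1, hS2, Matrix.one_mul]
  have hPOVM : IsPOVM M0 M1 M2 :=
    ⟨hMpsd _ hX0psd, hMpsd _ hX1psd, hMpsd _ hX2psd, hMsum⟩
  -- the value of P_I on this POVM
  have hPIval : PIof q₁ q₂ ρ₁ ρ₂ M0 = Q := by
    unfold PIof
    rw [← hSS, hM0def]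
    have h' : Matrix.trace (S * S * (S⁻¹ * (U * X0 * Uᴴ) * S⁻¹))
        = Matrix.trace (S * (S⁻¹ * (U * X0 * Uᴴ) * S⁻¹) * S) := by
      calc Matrix.trace (S * S * (S⁻¹ * (U * X0 * Uᴴ) * S⁻¹))
          = Matrix.trace (S * (S * (S⁻¹ * (U * X0 * Uᴴ) * S⁻¹))) := by
            simp only [Matrix.mul_assoc]
      _ = Matrix.trace ((S * (S⁻¹ * (U * X0 * Uᴴ) * S⁻¹)) * S) := Matrix.trace_mul_comm _ _
    rw [h', hSBS, htrU, hX0def, mk2_trace]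
    norm_num
  -- translating hbar₁, hbar₂
  set D1 : Matrix (Fin 2) (Fin 2) ℂ := mk2 w C₂ (1 - C₂) 0 with hD1def
  set D2 : Matrix (Fin 2) (Fin 2) ℂ := mk2 w (1 - C₂) C₂ 0 with hD2def
  have hbar₁' : S * (U * D1 * Uᴴ) * S = (q₁ : ℂ) • ρ₁ := by
    rw [hCeq] at hbar₁
    have h' : U * D1 * Uᴴ = (C₂ : ℂ) • vecMulVec ν₁ (star ν₁)
        + ((1 - C₂ : ℝ) : ℂ) • vecMulVec ν₂ (star ν₂) := by
      rw [hUdef, bmat_expand]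
      simp [hD1def, mk2]
    rw [h']
    exact hbar₁
  have hbar₂' : S * (U * D2 * Uᴴ) * S = (q₂ : ℂ) • ρ₂ := by
    rw [hCeq] at hbar₂
    have h' : U * D2 * Uᴴ = ((1 - C₂ : ℝ) : ℂ) • vecMulVec ν₁ (star ν₁)
        + (C₂ : ℂ) • vecMulVec ν₂ (star ν₂) := by
      rw [hUdef, bmat_expand]
      simp [hD2def, mk2]
    rw [h']
    exact hbar₂
  have hq1tr : ∀ M : Matrix (Fin 2) (Fin 2) ℂ,
      q₁ * (Matrix.trace (ρ₁ * M)).re = (Matrix.trace ((U * D1 * Uᴴ) * (S * M * S))).re := by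
    intro M
    rw [← hrot]
    rw [hbar₁']
    rw [Matrix.smul_mul, Matrix.trace_smul]
    rw [show ((q₁ : ℂ) • Matrix.trace (ρ₁ * M)) = (q₁ : ℂ) * Matrix.trace (ρ₁ * M) from rfl]
    rw [Complex.re_ofReal_mul]
  have hq2tr : ∀ M : Matrix (Fin 2) (Fin 2) ℂ,
      q₂ * (Matrix.trace (ρ₂ * M)).re = (Matrix.trace ((U * D2 * Uᴴ) * (S * M * S))).re := by
    intro M
    rw [← hrot]
    rw [hbar₂']
    rw [Matrix.smul_mul, Matrix.trace_smul]
    rw [show ((q₂ : ℂ) • Matrix.trace (ρ₂ * M)) = (q₂ : ℂ) * Matrix.trace (ρ₂ * M) from rfl]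
    rw [Complex.re_ofReal_mul]
  -- value of P_cor on our POVM
  have keyV : C₂ * nA00 + (1 - C₂) * nA11 + ((1 - C₂) * nB00 + C₂ * nB11)
      = (1 - Q) * d + (2 * C₂ - 1) * d ^ 2 := by
    rw [hnA00, hnA11, hnB00, hnB11]
    linear_combination (-(2 * C₂ - 1)) * hd2ab + d * hsal
  have hval : C₂ * A00 + (1 - C₂) * A11 + ((1 - C₂) * B00 + C₂ * B11)
      = (1 - Q) / 2 + (2 * C₂ - 1) * d / 2 := by
    have e1 : C₂ * A00 + (1 - C₂) * A11 + ((1 - C₂) * B00 + C₂ * B11)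
        = (C₂ * nA00 + (1 - C₂) * nA11 + ((1 - C₂) * nB00 + C₂ * nB11)) / (2 * d) := by
      rw [hA00d, hA11d, hB00d, hB11d]; ring
    rw [e1, keyV]
    field_simp
  have hPcorval : Pcor q₁ q₂ ρ₁ ρ₂ M1 M2
      = (1 - Q) / 2 + (2 * C₂ - 1) * d / 2 := by
    unfold Pcor
    rw [hq1tr M1, hq2tr M2, hM1def, hM2def, hSBS, hSBS, hmulU, hmulU, htrU, htrU]
    rw [hD1def, hX1def, hD2def, hX2def, htr2, htr2]
    rw [← hval]
    rw [show ((C₂ * A00 + (1 - C₂) * A11 + 2 * (0 * A01) : ℝ) : ℂ).re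
        = C₂ * A00 + (1 - C₂) * A11 + 2 * (0 * A01) from Complex.ofReal_re _]
    rw [show (((1 - C₂) * B00 + C₂ * B11 + 2 * (0 * B01) : ℝ) : ℂ).re
        = (1 - C₂) * B00 + C₂ * B11 + 2 * (0 * B01) from Complex.ofReal_re _]
    ring
  -- dual certificate for the upper bound
  obtain ⟨na, hnadef⟩ : ∃ x : ℝ, x = (1 - Q) - d := ⟨_, rfl⟩
  obtain ⟨nc, hncdef⟩ : ∃ x : ℝ, x = 2 * r - Q := ⟨_, rfl⟩
  obtain ⟨nmu, hnmudef⟩ : ∃ x : ℝ, x = 1 + d - 2 * r := ⟨_, rfl⟩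
  have hna0 : 0 ≤ na := by
    rw [hnadef]
    have : d ≤ 1 - Q := by
      rw [hddef]
      have h' : (1 - 2*r) * (1 + 2*r - 2*Q) ≤ (1 - Q) ^ 2 := by
        nlinarith only [sq_nonneg (2*r - Q)]
      calc Real.sqrt ((1 - 2*r) * (1 + 2*r - 2*Q)) ≤ Real.sqrt ((1 - Q)^2) :=
            Real.sqrt_le_sqrt h'
      _ = 1 - Q := Real.sqrt_sq (by linarith only [hQ1])
    linarith only [this]
  have hnc0 : 0 ≤ nc := by rw [hncdef]; linarith only [hQr]
  obtain ⟨a, hadef⟩ : ∃ x : ℝ, x = na / (2 * d) := ⟨_, rfl⟩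
  obtain ⟨c, hcdef⟩ : ∃ x : ℝ, x = nc / (2 * d) := ⟨_, rfl⟩
  obtain ⟨mu, hmudef⟩ : ∃ x : ℝ, x = nmu / (2 * d) := ⟨_, rfl⟩
  have ha0 : 0 ≤ a := by rw [hadef]; exact div_nonneg hna0 h2d0
  have hc0 : 0 ≤ c := by rw [hcdef]; exact div_nonneg hnc0 h2d0
  have keyc : nc ^ 2 = na * (na + 2 * d) := by
    rw [hncdef, hnadef]
    linear_combination hd2
  have hc2 : c ^ 2 = a * (1 + a) := by
    have e1 : c ^ 2 = nc ^ 2 / ((2 * d) * (2 * d)) := by rw [hcdef]; ring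
    have e2 : a * (1 + a) = (na * (na + 2 * d)) / ((2 * d) * (2 * d)) := by
      rw [hadef]
      have e3 : (1 : ℝ) + na / (2 * d) = (na + 2 * d) / (2 * d) := by
        field_simp
        ring
      rw [e3, div_mul_div_comm]
    rw [e1, e2, keyc]
  obtain ⟨ze, hzedef⟩ : ∃ x : ℝ, x = C₂ + (2 * C₂ - 1) * a := ⟨_, rfl⟩
  obtain ⟨ta, htadef⟩ : ∃ x : ℝ, x = -((2 * C₂ - 1) * c) := ⟨_, rfl⟩
  obtain ⟨lam, hlamdef⟩ : ∃ x : ℝ, x = (1 - C₂) + (2 * C₂ - 1) * mu := ⟨_, rfl⟩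
  set Zc : Matrix (Fin 2) (Fin 2) ℂ := mk2 w ze ze ta with hZcdef
  have mk2_sub : ∀ a b t a' b' t' : ℝ,
      mk2 w a b t - mk2 w a' b' t' = mk2 w (a - a') (b - b') (t - t') := by
    intro a b t a' b' t'
    unfold mk2
    ext i j
    fin_cases i <;> fin_cases j <;> (simp; try push_cast; try ring)
  have hCa : 0 ≤ (2 * C₂ - 1) * a :=
    mul_nonneg (by linarith only [hC]) ha0
  have hZD1psd : (Zc - D1).PosSemidef := by
    rw [hZcdef, hD1def, mk2_sub]
    apply psd2 hw
    · rw [hzedef]; linarith only [hCa]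
    · rw [hzedef]; linarith only [hCa, hC]
    · have e' : (ta - 0) ^ 2 = (2 * C₂ - 1) ^ 2 * (a * (1 + a)) := by
        rw [htadef, ← hc2]; ring
      rw [e', hzedef]
      apply le_of_eq
      ring
  have hZD2psd : (Zc - D2).PosSemidef := by
    rw [hZcdef, hD2def, mk2_sub]
    apply psd2 hw
    · rw [hzedef]; linarith only [hCa, hC]
    · rw [hzedef]; linarith only [hCa]
    · have e' : (ta - 0) ^ 2 = (2 * C₂ - 1) ^ 2 * (a * (1 + a)) := by
        rw [htadef, ← hc2]; ring
      rw [e', hzedef]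
      apply le_of_eq
      ring
  have h1amu : 1 + a - mu = c := by
    rw [hadef, hmudef, hcdef, hnadef, hnmudef, hncdef]
    field_simp
    ring
  have hzelam : ze - lam = (2 * C₂ - 1) * c := by
    rw [hzedef, hlamdef, ← h1amu]; ring
  have hCc : 0 ≤ (2 * C₂ - 1) * c :=
    mul_nonneg (by linarith only [hC]) hc0
  have hZLpsd : (Zc - mk2 w lam lam 0).PosSemidef := by
    rw [hZcdef, mk2_sub]
    apply psd2 hw
    · linarith only [hzelam, hCc]
    · linarith only [hzelam, hCc]
    · rw [hzelam]
      have e' : (ta - 0) ^ 2 = ((2 * C₂ - 1) * c) * ((2 * C₂ - 1) * c) := by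
        rw [htadef]; ring
      rw [e']
  have hlam1 : (lam : ℂ) • (1 : Matrix (Fin 2) (Fin 2) ℂ) = U * mk2 w lam lam 0 * Uᴴ := by
    have h' : mk2 w lam lam 0 = (lam : ℂ) • (1 : Matrix (Fin 2) (Fin 2) ℂ) := by
      unfold mk2
      rw [Matrix.one_fin_two]
      ext i j
      fin_cases i <;> fin_cases j <;> simp
    rw [h', Matrix.mul_smul, Matrix.smul_mul, Matrix.mul_one, hU2]
  have keyF : na - 2 * nc * r - nmu * Q = d ^ 2 - d * (1 + Q) := by
    rw [hnadef, hncdef, hnmudef]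
    linear_combination -hd2
  have hac : a - 2 * c * r - mu * Q = (d - 1 - Q) / 2 := by
    have e1 : a - 2 * c * r - mu * Q = (na - 2 * nc * r - nmu * Q) / (2 * d) := by
      rw [hadef, hcdef, hmudef]; ring
    rw [e1, keyF]
    field_simp
    ring
  have hfin : ze + 2 * ta * r - lam * Q = (1 - Q) / 2 + (2 * C₂ - 1) * d / 2 := by
    rw [hzedef, htadef, hlamdef]
    linear_combination (2 * C₂ - 1) * hac
  -- the upper bound for an arbitrary POVM
  have hub : ∀ N0 N1 N2 : Matrix (Fin 2) (Fin 2) ℂ, IsPOVM N0 N1 N2 →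
      PIof q₁ q₂ ρ₁ ρ₂ N0 = Q →
      Pcor q₁ q₂ ρ₁ ρ₂ N1 N2 ≤ (1 - Q) / 2 + (2 * C₂ - 1) * d / 2 := by
    intro N0 N1 N2 hpovm hpi
    obtain ⟨hN0, hN1, hN2, hNsum⟩ := hpovm
    have hT0 : (S * N0 * S).PosSemidef := by
      have h' := hN0.mul_mul_conjTranspose_same S
      rwa [hSH] at h'
    have hT1 : (S * N1 * S).PosSemidef := by
      have h' := hN1.mul_mul_conjTranspose_same S
      rwa [hSH] at h'
    have hT2 : (S * N2 * S).PosSemidef := by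
      have h' := hN2.mul_mul_conjTranspose_same S
      rwa [hSH] at h'
    have hTsum : S * N0 * S + S * N1 * S + S * N2 * S = U * R * Uᴴ := by
      have h' : S * N0 * S + S * N1 * S + S * N2 * S = S * (N0 + N1 + N2) * S := by
        simp only [Matrix.mul_add, Matrix.add_mul]
      rw [h', hNsum, Matrix.mul_one, hSS, hρ0c]
    -- Q as a trace
    have hQtr : Q = (Matrix.trace (S * N0 * S)).re := by
      rw [← hpi]
      unfold PIof
      rw [← hSS]
      congr 1
      calc Matrix.trace (S * S * N0) = Matrix.trace (S * (S * N0)) := by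
            simp only [Matrix.mul_assoc]
      _ = Matrix.trace ((S * N0) * S) := Matrix.trace_mul_comm _ _
      _ = Matrix.trace (S * N0 * S) := by simp only [Matrix.mul_assoc]
    -- three inequalities
    have hstep : ∀ (D T : Matrix (Fin 2) (Fin 2) ℂ), T.PosSemidef → (Zc - D).PosSemidef →
        (Matrix.trace ((U * D * Uᴴ) * T)).re ≤ (Matrix.trace ((U * Zc * Uᴴ) * T)).re := by
      intro D T hT hZD
      have hpsd : ((U * (Zc - D) * Uᴴ) * T).PosSemidef → True := fun _ => trivial
      have h1' := trace_mul_psd_nonneg_s19 (hZD.mul_mul_conjTranspose_same U) hT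
      have h2' : (U * (Zc - D) * Uᴴ) * T = (U * Zc * Uᴴ) * T - (U * D * Uᴴ) * T := by
        simp only [Matrix.mul_sub, Matrix.sub_mul]
      rw [h2', Matrix.trace_sub, Complex.sub_re] at h1'
      linarith only [h1']
    have hineq1 := hstep D1 (S * N1 * S) hT1 hZD1psd
    have hineq2 := hstep D2 (S * N2 * S) hT2 hZD2psd
    have hineq0 : lam * Q ≤ (Matrix.trace ((U * Zc * Uᴴ) * (S * N0 * S))).re := by
      have h' := hstep (mk2 w lam lam 0) (S * N0 * S) hT0 hZLpsd
      have h'' : (Matrix.trace ((U * mk2 w lam lam 0 * Uᴴ) * (S * N0 * S))).re = lam * Q := by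
        rw [← hlam1, Matrix.smul_mul, Matrix.one_mul, Matrix.trace_smul]
        rw [show ((lam : ℂ) • Matrix.trace (S * N0 * S))
            = (lam : ℂ) * Matrix.trace (S * N0 * S) from rfl]
        rw [Complex.re_ofReal_mul, ← hQtr]
      linarith only [h', h'']
    -- total
    have htot : (Matrix.trace ((U * Zc * Uᴴ) * (S * N0 * S))).re
        + (Matrix.trace ((U * Zc * Uᴴ) * (S * N1 * S))).re
        + (Matrix.trace ((U * Zc * Uᴴ) * (S * N2 * S))).re
        = ze + 2 * ta * r := by
      have h' : Matrix.trace ((U * Zc * Uᴴ) * (S * N0 * S))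
          + Matrix.trace ((U * Zc * Uᴴ) * (S * N1 * S))
          + Matrix.trace ((U * Zc * Uᴴ) * (S * N2 * S))
          = Matrix.trace ((U * Zc * Uᴴ) * (U * R * Uᴴ)) := by
        rw [← hTsum]
        simp only [Matrix.mul_add, Matrix.trace_add]
      have h'' : Matrix.trace ((U * Zc * Uᴴ) * (U * R * Uᴴ)) = ((ze * ρ11 + ze * ρ22
          + 2 * (ta * r) : ℝ) : ℂ) := by
        rw [hmulU, htrU, hZcdef, hRdef, htr2]
      have h3 : (Matrix.trace ((U * Zc * Uᴴ) * (S * N0 * S))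
          + Matrix.trace ((U * Zc * Uᴴ) * (S * N1 * S))
          + Matrix.trace ((U * Zc * Uᴴ) * (S * N2 * S))).re
          = ze * ρ11 + ze * ρ22 + 2 * (ta * r) := by
        rw [h', h'']
        exact Complex.ofReal_re _
      rw [Complex.add_re, Complex.add_re] at h3
      rw [h3]
      linear_combination ze * hsum1
    unfold Pcor
    rw [hq1tr N1, hq2tr N2]
    linarith only [hineq1, hineq2, hineq0, htot, hfin]
  -- assembling the sSup
  have hVnn : 0 ≤ (1 - Q) / 2 + (2 * C₂ - 1) * d / 2 := by
    have h' : 0 ≤ (2 * C₂ - 1) * d := mul_nonneg (by linarith only [hC]) hd0.le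
    linarith only [h', hQ1]
  have hVeq : (1 - Q) / 2 + ((2 * C₂ - 1) / 2) * Real.sqrt ((1 - 2 * r) * (1 + 2 * r - 2 * Q))
      = (1 - Q) / 2 + (2 * C₂ - 1) * d / 2 := by
    rw [hddef]; ring
  unfold PcorOpt
  rw [hVeq]
  apply le_antisymm
  · apply Real.sSup_le
    · rintro x ⟨N0, N1, N2, hpovm, hpi, rfl⟩
      exact hub N0 N1 N2 hpovm hpi
    · exact hVnn
  · apply le_csSup
    · refine ⟨(1 - Q) / 2 + (2 * C₂ - 1) * d / 2, ?_⟩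
      rintro x ⟨N0, N1, N2, hpovm, hpi, rfl⟩
      exact hub N0 N1 N2 hpovm hpi
    · exact ⟨M0, M1, M2, hPOVM, hPIval, hPcorval⟩


end FRIR
end
end
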